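/- Let ε ≥ 0. The supremum of p - q over all p, q ∈ [0,1] satisfying q ≤ p ≤ min{q·e^ε, q·e^{-ε} + 1 - e^{-ε}} equals (e^ε - 1)²·e^{-ε}/(e^ε - e^{-ε}) when ε > 0 (and equals 0 when ε = 0), which simplifies to (e^ε-1)/(e^ε+1). -/

import Mathlib

/-- The supremum of p - q over p, q ∈ [0,1] with
q ≤ p ≤ min{q e^ε, q e^{-ε} + 1 - e^{-ε}} is attained and equals (e^ε-1)/(e^ε+1);
moreover for ε > 0 this equals (e^ε-1)² e^{-ε} / (e^ε - e^{-ε}). -/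
theorem stmt1 (ε : ℝ) (hε : 0 ≤ ε) :
    IsGreatest {d : ℝ | ∃ p q : ℝ, 0 ≤ p ∧ p ≤ 1 ∧ 0 ≤ q ∧ q ≤ 1 ∧ q ≤ p ∧
        p ≤ min (q * Real.exp ε) (q * Real.exp (-ε) + 1 - Real.exp (-ε)) ∧ d = p - q}
      ((Real.exp ε - 1) / (Real.exp ε + 1))
    ∧ (0 < ε →
        (Real.exp ε - 1) ^ 2 * Real.exp (-ε) / (Real.exp ε - Real.exp (-ε))
          = (Real.exp ε - 1) / (Real.exp ε + 1)) := by
  set E := Real.exp ε with hE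
  have hE1 : 1 ≤ E := Real.one_le_exp hε
  have hEpos : 0 < E := lt_of_lt_of_le one_pos hE1
  have hE1pos : 0 < E + 1 := by linarith
  have hinv : Real.exp (-ε) = E⁻¹ := by rw [Real.exp_neg, hE]
  constructor
  · constructor
    · refine ⟨E / (E + 1), 1 / (E + 1), ?_, ?_, ?_, ?_, ?_, ?_, ?_⟩
      · positivity
      · rw [div_le_one hE1pos]; linarith
      · positivity
      · rw [div_le_one hE1pos]; linarith
      · gcongr
      · rw [hinv]
        apply le_min
        · rw [div_le_iff₀ hE1pos]
          field_simp
          exact le_rfl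
        · have h : (1 / (E + 1)) * E⁻¹ + 1 - E⁻¹ = E / (E + 1) := by
            field_simp; ring
          rw [h]
      · field_simp
    · rintro d ⟨p, q, hp0, hp1, hq0, hq1, hqp, hpmin, rfl⟩
      have h1 : p ≤ q * E := le_trans hpmin (min_le_left _ _)
      have h2 : p ≤ q * E⁻¹ + 1 - E⁻¹ := by
        have := le_trans hpmin (min_le_right _ _); rwa [hinv] at this
      rw [le_div_iff₀ hE1pos]
      rcases le_or_gt q (1 / (E + 1)) with hq | hq
      · have hq' : q * (E + 1) ≤ 1 := by
          rw [le_div_iff₀ hE1pos] at hq; linarith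
        nlinarith [mul_le_mul_of_nonneg_left hq' (by linarith : (0:ℝ) ≤ E - 1)]
      · have h2' : p * E ≤ q + E - 1 := by
          have := mul_le_mul_of_nonneg_right h2 hEpos.le
          have hEE : E⁻¹ * E = 1 := inv_mul_cancel₀ hEpos.ne'
          nlinarith
        nlinarith
  · intro hε'
    have hE1' : 1 < E := by
      have := Real.exp_lt_exp.mpr hε'
      rwa [Real.exp_zero] at this
    rw [hinv]
    have hne2 : E ^ 2 - 1 ≠ 0 := by nlinarith
    have hne : E - E⁻¹ ≠ 0 := by
      intro h
      have : E * (E - E⁻¹) = E ^ 2 - 1 := by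
        field_simp
      rw [h, mul_zero] at this
      exact hne2 this.symm
    have hne2' : E * E - 1 ≠ 0 := by nlinarith
    field_simp
    ring
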